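/- With E, U, ψ as below, there is no ℤ_p-lattice Λ in U that is an O_E-submodule of U and is homothetic to its dual lattice, i.e. such that Λ* = c·Λ for some c ∈ ℚ_p^×. -/

import Mathlib

namespace NSD
open Module
variable {p : ℕ} [Fact p.Prime]

/-- `x` is a `p`-adic integer. -/
def InR (x : ℚ_[p]) : Prop := ‖x‖ ≤ 1

lemma inR_iff {x : ℚ_[p]} : InR x ↔ ∃ z : ℤ_[p], (z : ℚ_[p]) = x :=
  ⟨fun h => ⟨⟨x, h⟩, rfl⟩, by rintro ⟨z, rfl⟩; exact z.2⟩

lemma InR.add {x y : ℚ_[p]} (hx : InR x) (hy : InR y) : InR (x + y) := by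
  rcases inR_iff.mp hx with ⟨z, rfl⟩; rcases inR_iff.mp hy with ⟨w, rfl⟩
  exact inR_iff.mpr ⟨z + w, by push_cast; ring⟩

lemma InR.mul {x y : ℚ_[p]} (hx : InR x) (hy : InR y) : InR (x * y) := by
  rcases inR_iff.mp hx with ⟨z, rfl⟩; rcases inR_iff.mp hy with ⟨w, rfl⟩
  exact inR_iff.mpr ⟨z * w, by push_cast; ring⟩

lemma inR_coe (z : ℤ_[p]) : InR (z : ℚ_[p]) := z.2

lemma inR_p_pow (k : ℕ) : InR ((p : ℚ_[p]) ^ k) :=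
  inR_iff.mpr ⟨(p : ℤ_[p]) ^ k, by push_cast; ring⟩

lemma val_nonneg_of_inR {x : ℚ_[p]} (h : InR x) : 0 ≤ x.valuation :=
  (Padic.norm_le_one_iff_val_nonneg x).mp h

lemma val_p_pow (k : ℕ) : ((p : ℚ_[p]) ^ k).valuation = k := by
  induction k with
  | zero => simp
  | succ n ih =>
    have hp : (p : ℚ_[p]) ≠ 0 := Nat.cast_ne_zero.mpr (Fact.out (p := p.Prime)).ne_zero
    rw [pow_succ, Padic.valuation_mul (pow_ne_zero _ hp) hp, ih, Padic.valuation_p]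
    push_cast; ring

lemma val_unit_zero {x y : ℚ_[p]} (hx : InR x) (hy : InR y) (h : x * y = 1) :
    x.valuation = 0 := by
  have hx0 : x ≠ 0 := fun h0 => by simp [h0] at h
  have hy0 : y ≠ 0 := fun h0 => by simp [h0] at h
  have := Padic.valuation_mul (p := p) hx0 hy0
  rw [h] at this
  simp only [Padic.valuation_one] at this
  have h1 := val_nonneg_of_inR hx
  have h2 := val_nonneg_of_inR hy
  omega

lemma det_inR {κ : Type*} [Fintype κ] [DecidableEq κ] {M : Matrix κ κ ℚ_[p]}
    (h : ∀ i j, InR (M i j)) : InR M.det := by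
  choose N hN using fun i j => inR_iff.mp (h i j)
  have hM : M = (PadicInt.Coe.ringHom (p := p)).mapMatrix (Matrix.of N) := by
    ext i j
    exact (hN i j).symm
  rw [hM, ← RingHom.map_det]
  exact inR_coe _

lemma clear_padic (x : ℚ_[p]) : ∃ k : ℕ, InR ((p : ℚ_[p]) ^ k * x) := by
  rcases eq_or_ne x 0 with rfl | hx
  · exact ⟨0, by simp [InR]⟩
  · refine ⟨x.valuation.natAbs, ?_⟩
    have hp : (p : ℚ_[p]) ≠ 0 := Nat.cast_ne_zero.mpr (Fact.out (p := p.Prime)).ne_zero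
    rw [InR, Padic.norm_le_one_iff_val_nonneg,
      Padic.valuation_mul (pow_ne_zero _ hp) hx, val_p_pow]
    omega

lemma extract_pair (r s : ℤ_[p]) (h : ¬(r = 0 ∧ s = 0)) :
    ∃ (m : ℕ) (r' s' : ℤ_[p]), r = (p : ℤ_[p]) ^ m * r' ∧ s = (p : ℤ_[p]) ^ m * s' ∧
      (‖r'‖ = 1 ∨ ‖s'‖ = 1) := by
  rcases eq_or_ne r 0 with rfl | hr
  · rcases eq_or_ne s 0 with rfl | hs
    · exact absurd ⟨rfl, rfl⟩ h
    · exact ⟨s.valuation, 0, PadicInt.unitCoeff hs, by ring,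
        by rw [mul_comm]; exact PadicInt.unitCoeff_spec hs, Or.inr (PadicInt.norm_units _)⟩
  rcases eq_or_ne s 0 with rfl | hs
  · exact ⟨r.valuation, PadicInt.unitCoeff hr, 0, by rw [mul_comm]; exact PadicInt.unitCoeff_spec hr, by ring, Or.inl (PadicInt.norm_units _)⟩
  rcases le_total r.valuation s.valuation with hle | hle
  · refine ⟨r.valuation, PadicInt.unitCoeff hr,
      (p : ℤ_[p]) ^ (s.valuation - r.valuation) * PadicInt.unitCoeff hs,
      by rw [mul_comm]; exact PadicInt.unitCoeff_spec hr, ?_, Or.inl (PadicInt.norm_units _)⟩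
    have h1 := Nat.zero_le r.valuation
    have h2 := Nat.zero_le s.valuation
    rw [← mul_assoc, ← pow_add]
    have : r.valuation + (s.valuation - r.valuation) = s.valuation := by
      omega
    rw [this, mul_comm]; exact PadicInt.unitCoeff_spec hs
  · refine ⟨s.valuation,
      (p : ℤ_[p]) ^ (r.valuation - s.valuation) * PadicInt.unitCoeff hr,
      PadicInt.unitCoeff hs, ?_, by rw [mul_comm]; exact PadicInt.unitCoeff_spec hs,
      Or.inr (PadicInt.norm_units _)⟩
    have h1 := Nat.zero_le r.valuation
    have h2 := Nat.zero_le s.valuation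
    rw [← mul_assoc, ← pow_add]
    have : s.valuation + (r.valuation - s.valuation) = r.valuation := by
      omega
    rw [this, mul_comm]; exact PadicInt.unitCoeff_spec hr


set_option linter.unusedSectionVars false

variable {E : Type*} [Field E] [Algebra ℚ_[p] E] [Algebra ℤ_[p] E]
    [IsScalarTower ℤ_[p] ℚ_[p] E] (bE : Basis (Fin 2) ℚ_[p] E)
    (hbE : Submodule.span ℤ_[p] {bE 0, bE 1}
      = Subalgebra.toSubmodule (integralClosure ℤ_[p] E))

lemma zsmul_eq (r : ℤ_[p]) (x : E) : r • x = (r : ℚ_[p]) • x := by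
  rw [← IsScalarTower.algebraMap_smul ℚ_[p] r x]
  norm_cast

lemma smul_pz (t : ℤ_[p]) (x : E) : ((p : ℤ_[p]) * t) • x = (p : E) * (t • x) := by
  rw [mul_smul]
  rw [show ((p : ℤ_[p])) = ((p : ℕ) : ℤ_[p]) by push_cast; ring, Nat.cast_smul_eq_nsmul]
  rw [nsmul_eq_mul]

include hbE

lemma mem_O_iff {x : E} : x ∈ integralClosure ℤ_[p] E ↔
    ∃ r s : ℤ_[p], r • bE 0 + s • bE 1 = x := by
  rw [← Subalgebra.mem_toSubmodule, ← hbE, Submodule.mem_span_pair]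

lemma bE_mem_O (i : Fin 2) : bE i ∈ integralClosure ℤ_[p] E := by
  rw [← Subalgebra.mem_toSubmodule, ← hbE]
  fin_cases i
  · exact Submodule.subset_span (by simp)
  · exact Submodule.subset_span (by simp)

omit hbE

lemma repr_combo (r s : ℤ_[p]) :
    bE.repr (r • bE 0 + s • bE 1) 0 = (r : ℚ_[p]) ∧
    bE.repr (r • bE 0 + s • bE 1) 1 = (s : ℚ_[p]) := by
  rw [zsmul_eq, zsmul_eq]
  constructor <;>
  · simp [Basis.repr_self, Finsupp.single_apply]

include hbE

lemma repr_of_mem_O {x : E} (hx : x ∈ integralClosure ℤ_[p] E) (i : Fin 2) :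
    InR (bE.repr x i) := by
  obtain ⟨r, s, rfl⟩ := (mem_O_iff bE hbE).mp hx
  match i with
  | 0 => rw [(repr_combo bE r s).1]; exact inR_coe r
  | 1 => rw [(repr_combo bE r s).2]; exact inR_coe s

lemma clear_E (x : E) : ∃ k : ℕ, ((p : ℚ_[p]) ^ k) • x ∈ integralClosure ℤ_[p] E := by
  obtain ⟨k₀, h₀⟩ := clear_padic (bE.repr x 0)
  obtain ⟨k₁, h₁⟩ := clear_padic (bE.repr x 1)
  refine ⟨k₀ + k₁, ?_⟩
  have key : ∀ i : Fin 2, InR ((p : ℚ_[p]) ^ (k₀ + k₁) * bE.repr x i) := by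
    intro i
    match i with
    | 0 =>
      have : (p : ℚ_[p]) ^ (k₀ + k₁) * bE.repr x 0
          = (p : ℚ_[p]) ^ k₁ * ((p : ℚ_[p]) ^ k₀ * bE.repr x 0) := by ring
      rw [this]; exact (inR_p_pow k₁).mul h₀
    | 1 =>
      have : (p : ℚ_[p]) ^ (k₀ + k₁) * bE.repr x 1
          = (p : ℚ_[p]) ^ k₀ * ((p : ℚ_[p]) ^ k₁ * bE.repr x 1) := by ring
      rw [this]; exact (inR_p_pow k₀).mul h₁
  obtain ⟨r, hr⟩ := inR_iff.mp (key 0)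
  obtain ⟨s, hs⟩ := inR_iff.mp (key 1)
  refine (mem_O_iff bE hbE).mpr ⟨r, s, ?_⟩
  have hx := bE.sum_repr x
  rw [Fin.sum_univ_two] at hx
  rw [zsmul_eq, zsmul_eq, hr, hs]
  calc ((p:ℚ_[p]) ^ (k₀+k₁) * bE.repr x 0) • bE 0 + ((p:ℚ_[p]) ^ (k₀+k₁) * bE.repr x 1) • bE 1
      = ((p:ℚ_[p]) ^ (k₀+k₁)) • (bE.repr x 0 • bE 0 + bE.repr x 1 • bE 1) := by
        rw [smul_add, smul_smul, smul_smul]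
    _ = ((p:ℚ_[p]) ^ (k₀+k₁)) • x := by rw [hx]

lemma pdvd_iff {b : E} :
    (∃ t ∈ integralClosure ℤ_[p] E, b = (p : E) * t) ↔
    (∃ t₀ t₁ : ℤ_[p], b = ((p : ℤ_[p]) * t₀) • bE 0 + ((p : ℤ_[p]) * t₁) • bE 1) := by
  constructor
  · rintro ⟨t, ht, rfl⟩
    obtain ⟨t₀, t₁, rfl⟩ := (mem_O_iff bE hbE).mp ht
    refine ⟨t₀, t₁, ?_⟩
    rw [mul_add, ← smul_pz, ← smul_pz]
  · rintro ⟨t₀, t₁, rfl⟩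
    refine ⟨t₀ • bE 0 + t₁ • bE 1, (mem_O_iff bE hbE).mpr ⟨t₀, t₁, rfl⟩, ?_⟩
    rw [mul_add, ← smul_pz, ← smul_pz]

lemma extract_E {x : E} (hx : x ∈ integralClosure ℤ_[p] E) (hx0 : x ≠ 0) :
    ∃ (m : ℕ) (b : E), b ∈ integralClosure ℤ_[p] E ∧ x = ((p : ℚ_[p]) ^ m) • b ∧
      ¬ (∃ t ∈ integralClosure ℤ_[p] E, b = (p : E) * t) := by
  obtain ⟨r, s, rfl⟩ := (mem_O_iff bE hbE).mp hx
  have hrs : ¬(r = 0 ∧ s = 0) := by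
    rintro ⟨rfl, rfl⟩; simp at hx0
  obtain ⟨m, r', s', hr, hs, hunit⟩ := extract_pair r s hrs
  refine ⟨m, r' • bE 0 + s' • bE 1, (mem_O_iff bE hbE).mpr ⟨r', s', rfl⟩, ?_, ?_⟩
  · rw [hr, hs, zsmul_eq, zsmul_eq, zsmul_eq r', zsmul_eq s', smul_add, smul_smul, smul_smul]
    push_cast
    ring_nf
  · intro hcon
    obtain ⟨t₀, t₁, heq⟩ := (pdvd_iff bE hbE).mp hcon
    have e0 : (r' : ℚ_[p]) = ((p : ℤ_[p]) * t₀ : ℤ_[p]) := by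
      have h1 := (repr_combo bE r' s').1
      have h2 := (repr_combo bE ((p : ℤ_[p]) * t₀) ((p : ℤ_[p]) * t₁)).1
      rw [heq] at h1
      rw [h1] at h2
      exact h2
    have e1 : (s' : ℚ_[p]) = ((p : ℤ_[p]) * t₁ : ℤ_[p]) := by
      have h1 := (repr_combo bE r' s').2
      have h2 := (repr_combo bE ((p : ℤ_[p]) * t₀) ((p : ℤ_[p]) * t₁)).2
      rw [heq] at h1
      rw [h1] at h2
      exact h2
    have d0 : (p : ℤ_[p]) ∣ r' := ⟨t₀, Subtype.coe_injective e0⟩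
    have d1 : (p : ℤ_[p]) ∣ s' := ⟨t₁, Subtype.coe_injective e1⟩
    rcases hunit with h | h
    · exact absurd h (ne_of_lt ((PadicInt.norm_lt_one_iff_dvd r').mpr d0))
    · exact absurd h (ne_of_lt ((PadicInt.norm_lt_one_iff_dvd s').mpr d1))

omit hbE in
lemma unit_O (hunram : (Ideal.span {(p : integralClosure ℤ_[p] E)}).IsMaximal)
    {b : E} (hb : b ∈ integralClosure ℤ_[p] E)
    (hnd : ¬ (∃ t ∈ integralClosure ℤ_[p] E, b = (p : E) * t)) :
    ∃ y ∈ integralClosure ℤ_[p] E, b * y = 1 := by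
  set A := integralClosure ℤ_[p] E
  set bh : A := ⟨b, hb⟩ with hbh
  have hunit : IsUnit bh := by
    by_contra hnu
    have hne : Ideal.span {bh} ≠ ⊤ := fun h => hnu (Ideal.span_singleton_eq_top.mp h)
    obtain ⟨m, hm, hle⟩ := Ideal.exists_le_maximal _ hne
    have hcomap : (Ideal.comap (algebraMap ℤ_[p] A) m).IsMaximal :=
      Ideal.isMaximal_comap_of_isIntegral_of_isMaximal m
    have heq : Ideal.comap (algebraMap ℤ_[p] A) m = IsLocalRing.maximalIdeal ℤ_[p] :=
      IsLocalRing.eq_maximalIdeal hcomap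
    have hpnu : ¬ IsUnit (p : ℤ_[p]) := by
      rw [PadicInt.isUnit_iff, PadicInt.norm_p]
      have h2 : (2 : ℝ) ≤ (p : ℝ) := by
        exact_mod_cast (Fact.out (p := p.Prime)).two_le
      intro hcon
      have : (p : ℝ) = 1 := by
        rw [inv_eq_one] at hcon; exact hcon
      linarith
    have hpm : (p : ℤ_[p]) ∈ IsLocalRing.maximalIdeal ℤ_[p] := hpnu
    have hpA : (p : A) ∈ m := by
      have : (p : ℤ_[p]) ∈ Ideal.comap (algebraMap ℤ_[p] A) m := heq ▸ hpm
      have h2 : algebraMap ℤ_[p] A (p : ℤ_[p]) ∈ m := this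
      rwa [map_natCast] at h2
    have hspan : Ideal.span {(p : A)} ≤ m := by
      rw [Ideal.span_le, Set.singleton_subset_iff]; exact hpA
    have hmeq : Ideal.span {(p : A)} = m := hunram.eq_of_le hm.ne_top hspan
    have hbm : bh ∈ Ideal.span {(p : A)} := by
      rw [hmeq]; exact hle (Ideal.subset_span rfl)
    obtain ⟨t, ht⟩ := Ideal.mem_span_singleton.mp hbm
    refine hnd ⟨(t : E), t.2, ?_⟩
    have := congrArg (Subtype.val) ht
    push_cast at this
    exact this
  obtain ⟨u, hu⟩ := hunit
  refine ⟨((u⁻¹ : Aˣ) : A), ((u⁻¹ : Aˣ) : A).2, ?_⟩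
  have : (bh * ((u⁻¹ : Aˣ) : A) : A) = 1 := by
    rw [← hu]; exact u.mul_inv
  have := congrArg (Subtype.val) this
  push_cast at this
  convert this


omit hbE

/-- Field norm of `E/ℚ_p` as a determinant. -/
noncomputable def NN (x : E) : ℚ_[p] := (Algebra.leftMulMatrix bE x).det

lemma NN_mul (x y : E) : NN bE (x * y) = NN bE x * NN bE y := by
  unfold NN; rw [map_mul, Matrix.det_mul]

lemma NN_one : NN bE 1 = 1 := by unfold NN; rw [map_one, Matrix.det_one]

lemma NN_ne_zero {x : E} (hx : x ≠ 0) : NN bE x ≠ 0 := by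
  have h : NN bE x * NN bE x⁻¹ = 1 := by
    rw [← NN_mul, mul_inv_cancel₀ hx, NN_one]
  intro h0; rw [h0, zero_mul] at h; exact zero_ne_one h

lemma NN_algebraMap (t : ℚ_[p]) : NN bE (algebraMap ℚ_[p] E t) = t ^ 2 := by
  have hL : Algebra.leftMulMatrix bE (algebraMap ℚ_[p] E t)
      = t • (1 : Matrix (Fin 2) (Fin 2) ℚ_[p]) := by
    ext i j
    rw [Algebra.leftMulMatrix_eq_repr_mul, ← Algebra.smul_def, map_smul]
    simp [Basis.repr_self, Matrix.one_apply, Finsupp.single_apply, eq_comm]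
  unfold NN
  rw [hL, Matrix.det_smul, Matrix.det_one]
  simp

lemma NN_smul (t : ℚ_[p]) (x : E) : NN bE (t • x) = t ^ 2 * NN bE x := by
  rw [Algebra.smul_def, NN_mul, NN_algebraMap]

include hbE in
lemma NN_inR {x : E} (hx : x ∈ integralClosure ℤ_[p] E) : InR (NN bE x) := by
  apply det_inR
  intro i j
  rw [Algebra.leftMulMatrix_eq_repr_mul]
  exact repr_of_mem_O bE hbE (mul_mem hx (bE_mem_O bE hbE j)) i

include hbE in
lemma NN_parity (hunram : (Ideal.span {(p : integralClosure ℤ_[p] E)}).IsMaximal)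
    {x : E} (hx : x ≠ 0) : Even ((NN bE x).valuation) := by
  obtain ⟨k, hk⟩ := clear_E bE hbE x
  set y := ((p : ℚ_[p]) ^ k) • x with hy
  have hpk : ((p : ℚ_[p]) ^ k) ≠ 0 :=
    pow_ne_zero _ (Nat.cast_ne_zero.mpr (Fact.out (p := p.Prime)).ne_zero)
  have hy0 : y ≠ 0 := smul_ne_zero hpk hx
  obtain ⟨m, b, hbO, hyb, hnd⟩ := extract_E bE hbE hk hy0
  have hb0 : b ≠ 0 := by
    rintro rfl; rw [smul_zero] at hyb; exact hy0 hyb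
  obtain ⟨w, hwO, hbw⟩ := unit_O hunram hbO hnd
  have hvb : (NN bE b).valuation = 0 := by
    refine val_unit_zero (NN_inR bE hbE hbO) (NN_inR bE hbE hwO) ?_
    rw [← NN_mul, hbw, NN_one]
  have e1 : ((p : ℚ_[p]) ^ k) ^ 2 * NN bE x = ((p : ℚ_[p]) ^ m) ^ 2 * NN bE b := by
    rw [← NN_smul, ← NN_smul, ← hy, hyb]
  have hNb : NN bE b ≠ 0 := NN_ne_zero bE hb0
  have hNx : NN bE x ≠ 0 := NN_ne_zero bE hx
  have v1 : (((p : ℚ_[p]) ^ k) ^ 2 * NN bE x).valuation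
      = (2 * k : ℕ) + (NN bE x).valuation := by
    rw [Padic.valuation_mul (pow_ne_zero _ hpk) hNx, ← pow_mul, val_p_pow]
    push_cast; ring
  have v2 : (((p : ℚ_[p]) ^ m) ^ 2 * NN bE b).valuation = (2 * m : ℕ) := by
    rw [Padic.valuation_mul (pow_ne_zero _ (pow_ne_zero _ (Nat.cast_ne_zero.mpr
      (Fact.out (p := p.Prime)).ne_zero))) hNb, ← pow_mul, val_p_pow, hvb]
    push_cast; ring
  have := v1.symm.trans (by rw [e1, v2])
  refine ⟨(m : ℤ) - k, ?_⟩
  omega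


lemma pE_smul (k : ℕ) (v : E) : ((p : ℚ_[p]) ^ k) • v = (p : E) ^ k * v := by
  rw [Algebra.smul_def, map_pow, map_natCast]

include hbE in
lemma isPID (hunram : (Ideal.span {(p : integralClosure ℤ_[p] E)}).IsMaximal) :
    IsPrincipalIdealRing (integralClosure ℤ_[p] E) := by
  classical
  constructor
  intro I
  rcases eq_or_ne I ⊥ with rfl | hI
  · exact ⟨⟨0, Ideal.span_zero.symm⟩⟩
  obtain ⟨x, hxI, hx0⟩ := Submodule.exists_mem_ne_zero_of_ne_bot hI
  have hcoe0 : ∀ z : integralClosure ℤ_[p] E, z ≠ 0 → (z : E) ≠ 0 := by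
    intro z hz h; exact hz (Subtype.ext h)
  let P : ℕ → Prop := fun m => ∃ z, z ∈ I ∧ z ≠ 0 ∧
      ∃ b ∈ integralClosure ℤ_[p] E, (¬ ∃ t ∈ integralClosure ℤ_[p] E, b = (p : E) * t) ∧
        (z : E) = ((p : ℚ_[p]) ^ m) • b
  have hPx : ∃ m, P m := by
    obtain ⟨m, b, hb, hxb, hnd⟩ := extract_E bE hbE x.2 (hcoe0 x hx0)
    exact ⟨m, x, hxI, hx0, b, hb, hnd, hxb⟩
  let k := Nat.find hPx
  obtain ⟨z, hzI, hz0, b, hbO, hnd, hzb⟩ : P k := Nat.find_spec hPx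
  obtain ⟨y, hyO, hby⟩ := unit_O hunram hbO hnd
  have hpk : ((p : integralClosure ℤ_[p] E)) ^ k ∈ I := by
    have heq : ((p : integralClosure ℤ_[p] E)) ^ k = z * ⟨y, hyO⟩ := by
      apply Subtype.ext
      push_cast
      rw [hzb, smul_mul_assoc, hby, pE_smul, mul_one]
    rw [heq]
    exact Ideal.mul_mem_right _ _ hzI
  refine ⟨⟨(p : integralClosure ℤ_[p] E) ^ k, le_antisymm ?_ ?_⟩⟩
  · intro w hw
    rcases eq_or_ne w 0 with rfl | hw0
    · exact Submodule.zero_mem _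
    obtain ⟨m, bw, hbwO, hwb, hndw⟩ := extract_E bE hbE w.2 (hcoe0 w hw0)
    have hkm : k ≤ m := Nat.find_min' hPx ⟨w, hw, hw0, bw, hbwO, hndw, hwb⟩
    have hmem : ((p : ℚ_[p]) ^ (m - k)) • bw ∈ integralClosure ℤ_[p] E := by
      have : ((p : ℚ_[p]) ^ (m - k)) • bw = ((p : ℤ_[p]) ^ (m - k)) • bw := by
        rw [zsmul_eq]; push_cast; ring_nf
      rw [this]
      exact Subalgebra.smul_mem _ hbwO _
    refine Ideal.mem_span_singleton.mpr ⟨⟨((p : ℚ_[p]) ^ (m - k)) • bw, hmem⟩, ?_⟩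
    apply Subtype.ext
    push_cast
    rw [hwb, ← pE_smul, smul_smul, ← pow_add, Nat.add_sub_cancel' hkm]
  · exact Ideal.span_le.mpr (Set.singleton_subset_iff.mpr hpk)

lemma zsmulV (r : ℤ_[p]) (v : E × E) : r • v = (r : ℚ_[p]) • v := by
  rw [← IsScalarTower.algebraMap_smul ℚ_[p] r v]
  norm_cast

set_option synthInstance.maxHeartbeats 1000000 in
set_option maxHeartbeats 2000000 in
include hbE in
lemma exists_good_basis (hunram : (Ideal.span {(p : integralClosure ℤ_[p] E)}).IsMaximal)
    (Λ : Submodule ℤ_[p] (E × E)) (hFG : Λ.FG)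
    (hspan : Submodule.span ℚ_[p] (Λ : Set (E × E)) = ⊤)
    (hO : ∀ a : E, a ∈ integralClosure ℤ_[p] E → ∀ v ∈ Λ, a • v ∈ Λ) :
    ∃ u : Fin 2 → E × E, LinearIndependent E u ∧
      Λ = Submodule.span ℤ_[p]
        (Set.range fun ik : Fin 2 × Fin 2 => bE ik.2 • (u ik.1)) := by
  classical
  set A := integralClosure ℤ_[p] E with hA
  let ΛO : Submodule A (E × E) :=
    { carrier := Λ
      add_mem' := fun h1 h2 => Λ.add_mem h1 h2
      zero_mem' := Λ.zero_mem
      smul_mem' := fun a v hv => hO a a.2 v hv }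
  have hmemΛO : ∀ x : E × E, x ∈ ΛO ↔ x ∈ Λ := fun x => Iff.rfl
  haveI hPID : IsPrincipalIdealRing A := isPID bE hbE hunram
  haveI : NoZeroSMulDivisors A (E × E) := by
    constructor
    intro a x h
    have h2 : (a : E) • x = 0 := h
    rcases smul_eq_zero.mp h2 with h1 | h1
    · left; exact Subtype.ext h1
    · right; exact h1
  haveI : NoZeroSMulDivisors A ↥ΛO := by
    constructor
    rintro a ⟨x, hx⟩ h
    have h2 : (a : E) • x = 0 := congrArg Subtype.val h
    rcases smul_eq_zero.mp h2 with h1 | h1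
    · left; exact Subtype.ext h1
    · right; exact Subtype.ext h1
  obtain ⟨S, hS⟩ := hFG
  let s : ↥(S : Set (E × E)) → ↥ΛO := fun x => ⟨x.1, by
    show (x : E × E) ∈ Λ
    rw [← hS]; exact Submodule.subset_span x.2⟩
  have hrange : ΛO.subtype '' Set.range s = (S : Set (E × E)) := by
    ext y
    constructor
    · rintro ⟨z, ⟨w, rfl⟩, rfl⟩; exact w.2
    · intro hy; exact ⟨s ⟨y, hy⟩, ⟨⟨y, hy⟩, rfl⟩, rfl⟩
  have hspanAS : Submodule.span A (S : Set (E × E)) = ΛO := by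
    apply le_antisymm
    · rw [Submodule.span_le]
      intro y hy
      show y ∈ Λ
      rw [← hS]; exact Submodule.subset_span hy
    · intro y hy
      have : y ∈ Submodule.span ℤ_[p] (S : Set (E × E)) := by rw [hS]; exact hy
      exact Submodule.span_le_restrictScalars ℤ_[p] A (S : Set (E × E)) this
  have hsspan : Submodule.span A (Set.range s) = ⊤ := by
    apply Submodule.map_injective_of_injective (ΛO.injective_subtype)
    rw [Submodule.map_span, hrange, Submodule.map_subtype_top, hspanAS]
  haveI : Module.Finite A ↥ΛO :=
    ⟨⟨(Set.finite_range s).toFinset, by rw [Set.Finite.coe_toFinset]; exact hsspan⟩⟩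
  haveI hfree : Module.Free A ↥ΛO := Module.free_of_finite_type_torsion_free hsspan
  let B := Module.Free.chooseBasis A ↥ΛO
  let ι := Module.Free.ChooseBasisIndex A ↥ΛO
  let u' : ι → E × E := fun i => ((B i : ↥ΛO) : E × E)
  have hu'mem : ∀ i, u' i ∈ Λ := fun i => (B i).2
  have hOli : LinearIndependent A u' :=
    B.linearIndependent.map' ΛO.subtype (Submodule.ker_subtype _)
  have hpne : (p : ℚ_[p]) ≠ 0 := Nat.cast_ne_zero.mpr (Fact.out (p := p.Prime)).ne_zero
  -- E-linear independence of u'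
  have hEli : LinearIndependent E u' := by
    rw [Fintype.linearIndependent_iff]
    intro g hg
    choose k hk using fun i => clear_E bE hbE (g i)
    let km := ∑ i, k i
    have hmem : ∀ i, ((p : ℚ_[p]) ^ km) • g i ∈ A := by
      intro i
      have h1 : ((p : ℚ_[p]) ^ km) • g i
          = ((p : ℤ_[p]) ^ (km - k i)) • (((p : ℚ_[p]) ^ (k i)) • g i) := by
        rw [zsmul_eq, smul_smul]
        push_cast
        rw [← pow_add, Nat.sub_add_cancel (Finset.single_le_sum
          (f := fun i => k i) (fun _ _ => Nat.zero_le _) (Finset.mem_univ i))]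
      rw [h1]
      exact Subalgebra.smul_mem _ (hk i) _
    have hsum : ∑ i, (⟨((p : ℚ_[p]) ^ km) • g i, hmem i⟩ : A) • u' i = 0 := by
      have : ∑ i, (⟨((p : ℚ_[p]) ^ km) • g i, hmem i⟩ : A) • u' i
          = ((p : ℚ_[p]) ^ km) • ∑ i, g i • u' i := by
        rw [Finset.smul_sum]
        apply Finset.sum_congr rfl
        intro i _
        show (((p : ℚ_[p]) ^ km) • g i) • u' i = _
        rw [smul_assoc]
      rw [this, hg, smul_zero]
    have := Fintype.linearIndependent_iff.mp hOli _ hsum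
    intro i
    have h0 : ((p : ℚ_[p]) ^ km) • g i = 0 := congrArg Subtype.val (this i)
    rcases smul_eq_zero.mp h0 with h1 | h1
    · exact absurd h1 (pow_ne_zero _ hpne)
    · exact h1
  -- E-spanning
  have hmemspanA : ∀ x ∈ Λ, x ∈ Submodule.span A (Set.range u') := by
    intro x hx
    have hx' : (⟨x, hx⟩ : ↥ΛO) ∈ Submodule.span A (Set.range B) := by
      rw [B.span_eq]; trivial
    have : x ∈ Submodule.map ΛO.subtype (Submodule.span A (Set.range B)) :=
      ⟨⟨x, hx⟩, hx', rfl⟩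
    rw [Submodule.map_span] at this
    have hr : ΛO.subtype '' Set.range B = Set.range u' := by
      ext y
      constructor
      · rintro ⟨z, ⟨w, rfl⟩, rfl⟩; exact ⟨w, rfl⟩
      · rintro ⟨w, rfl⟩; exact ⟨B w, ⟨w, rfl⟩, rfl⟩
    rwa [hr] at this
  have hEspan : ⊤ ≤ Submodule.span E (Set.range u') := by
    intro x _
    have hx : x ∈ Submodule.span ℚ_[p] (Λ : Set (E × E)) := by rw [hspan]; trivial
    have hsub : (Λ : Set (E × E)) ⊆ ((Submodule.span E (Set.range u')).restrictScalars ℚ_[p] : Set (E × E)) := by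
      intro y hy
      exact Submodule.span_le_restrictScalars (↥A) E (Set.range u') (hmemspanA y hy)
    exact Submodule.span_le.mpr hsub hx
  let bU : Basis ι E (E × E) := Basis.mk hEli hEspan
  have hcard : Fintype.card ι = 2 := by
    have h1 := Module.finrank_eq_card_basis bU
    have h2 : Module.finrank E (E × E) = 2 := by
      simp [Module.finrank_prod]
    omega
  let e : ι ≃ Fin 2 := Fintype.equivFinOfCardEq hcard
  let u : Fin 2 → E × E := u' ∘ e.symm
  have humem : ∀ i, u i ∈ Λ := fun i => hu'mem (e.symm i)
  refine ⟨u, hEli.comp e.symm e.symm.injective, ?_⟩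
  set γ : Fin 2 × Fin 2 → E × E := fun ik => bE ik.2 • (u ik.1) with hγ
  -- a helper: O-multiples of u i lie in span γ
  have hcomb : ∀ w : E, w ∈ A → ∀ i : Fin 2, w • u i ∈ Submodule.span ℤ_[p] (Set.range γ) := by
    intro w hw i
    obtain ⟨r, t, rfl⟩ := (mem_O_iff bE hbE).mp hw
    have : (r • bE 0 + t • bE 1) • u i
        = r • (bE 0 • u i) + t • (bE 1 • u i) := by
      rw [add_smul, zsmul_eq, zsmul_eq, zsmulV, zsmulV, smul_assoc, smul_assoc]
    rw [this]
    exact Submodule.add_mem _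
      (Submodule.smul_mem _ _ (Submodule.subset_span ⟨(i, 0), rfl⟩))
      (Submodule.smul_mem _ _ (Submodule.subset_span ⟨(i, 1), rfl⟩))
  apply le_antisymm
  · -- Λ ≤ span γ
    intro x hx
    have hx' := hmemspanA x hx
    clear hx
    have hsmul : ∀ (a : A), ∀ y ∈ Submodule.span ℤ_[p] (Set.range γ),
        a • y ∈ Submodule.span ℤ_[p] (Set.range γ) := by
      intro a y hy
      induction hy using Submodule.span_induction with
      | mem z hz =>
        obtain ⟨⟨i, kk⟩, rfl⟩ := hz
        have : a • γ (i, kk) = ((a : E) * bE kk) • u i := by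
          show (a : E) • (bE kk • u i) = _
          rw [smul_smul]
        rw [this]
        exact hcomb _ (mul_mem a.2 (bE_mem_O bE hbE kk)) i
      | zero => rw [smul_zero]; exact Submodule.zero_mem _
      | add y z _ _ hy hz => rw [smul_add]; exact Submodule.add_mem _ hy hz
      | smul r y _ hy =>
        rw [smul_comm]
        exact Submodule.smul_mem _ _ hy
    induction hx' using Submodule.span_induction with
    | mem z hz =>
      obtain ⟨i, rfl⟩ := hz
      have h2 : u' i = u (e i) := by simp [u]
      rw [h2]
      have := hcomb 1 (one_mem A) (e i)
      rwa [one_smul] at this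
    | zero => exact Submodule.zero_mem _
    | add y z _ _ hy hz => exact Submodule.add_mem _ hy hz
    | smul a y _ hy => exact hsmul a y hy
  · -- span γ ≤ Λ
    rw [Submodule.span_le]
    rintro x ⟨⟨i, kk⟩, rfl⟩
    exact hO (bE kk) (bE_mem_O bE hbE kk) (u i) (humem i)

lemma val_pow (x : ℚ_[p]) (hx : x ≠ 0) (n : ℕ) :
    (x ^ n).valuation = n * x.valuation := by
  induction n with
  | zero => simp
  | succ m ih =>
    rw [pow_succ, Padic.valuation_mul (pow_ne_zero _ hx) hx, ih]
    push_cast; ring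

set_option maxHeartbeats 2000000 in
include hbE in
lemma main_false (hunram : (Ideal.span {(p : integralClosure ℤ_[p] E)}).IsMaximal)
    (Λ : Submodule ℤ_[p] (E × E))
    (hspan : Submodule.span ℚ_[p] (Λ : Set (E × E)) = ⊤)
    (u : Fin 2 → E × E) (hu : LinearIndependent E u)
    (hΛ : Λ = Submodule.span ℤ_[p]
      (Set.range fun ik : Fin 2 × Fin 2 => bE ik.2 • (u ik.1)))
    (c : ℚ_[p]) (hc : c ≠ 0)
    (hdual : {w : E × E | ∀ w' ∈ Λ, ∃ z : ℤ_[p], (z : ℚ_[p]) =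
        (p : ℚ_[p]) * (bE.repr w.1 0 * bE.repr w'.1 1 - bE.repr w.1 1 * bE.repr w'.1 0)
        + (bE.repr w.2 0 * bE.repr w'.2 1 - bE.repr w.2 1 * bE.repr w'.2 0)}
      = (fun v : E × E => c • v) '' (Λ : Set (E × E))) : False := by
  classical
  have hpne : (p : ℚ_[p]) ≠ 0 := Nat.cast_ne_zero.mpr (Fact.out (p := p.Prime)).ne_zero
  -- the symplectic form
  set ψf : (E × E) → (E × E) → ℚ_[p] := fun x y =>
    (p : ℚ_[p]) * (bE.repr x.1 0 * bE.repr y.1 1 - bE.repr x.1 1 * bE.repr y.1 0)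
      + (bE.repr x.2 0 * bE.repr y.2 1 - bE.repr x.2 1 * bE.repr y.2 0) with hψf
  have hadd1 : ∀ (x x' y : E × E), ψf (x + x') y = ψf x y + ψf x' y := by
    intro x x' y
    simp only [hψf, Prod.fst_add, Prod.snd_add, map_add, Finsupp.add_apply]
    ring
  have hsmul1 : ∀ (t : ℚ_[p]) (x y : E × E), ψf (t • x) y = t • ψf x y := by
    intro t x y
    simp only [hψf, Prod.smul_fst, Prod.smul_snd, map_smul, Finsupp.smul_apply, smul_eq_mul]
    ring
  have hadd2 : ∀ (x y y' : E × E), ψf x (y + y') = ψf x y + ψf x y' := by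
    intro x y y'
    simp only [hψf, Prod.fst_add, Prod.snd_add, map_add, Finsupp.add_apply]
    ring
  have hsmul2 : ∀ (t : ℚ_[p]) (x y : E × E), ψf x (t • y) = t • ψf x y := by
    intro t x y
    simp only [hψf, Prod.smul_fst, Prod.smul_snd, map_smul, Finsupp.smul_apply, smul_eq_mul]
    ring
  set Ψ : LinearMap.BilinForm ℚ_[p] (E × E) :=
    LinearMap.mk₂ ℚ_[p] ψf hadd1 hsmul1 hadd2 hsmul2 with hΨ
  have hΨapp : ∀ x y, Ψ x y = ψf x y := fun x y => rfl
  -- the product basis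
  set b₀ : Basis (Fin 2 ⊕ Fin 2) ℚ_[p] (E × E) := bE.prod bE with hb₀
  -- the lattice family reindexed
  set γ : (Fin 2 ⊕ Fin 2) → E × E :=
    Sum.elim (fun j => bE j • u 0) (fun j => bE j • u 1) with hγdef
  have hγrange : (Set.range fun ik : Fin 2 × Fin 2 => bE ik.2 • (u ik.1)) = Set.range γ := by
    ext x
    constructor
    · rintro ⟨⟨i, k⟩, rfl⟩
      fin_cases i
      · exact ⟨Sum.inl k, rfl⟩
      · exact ⟨Sum.inr k, rfl⟩
    · rintro ⟨k, rfl⟩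
      cases k with
      | inl j => exact ⟨(0, j), rfl⟩
      | inr j => exact ⟨(1, j), rfl⟩
  have hΛ' : Λ = Submodule.span ℤ_[p] (Set.range γ) := by rw [hΛ, hγrange]
  have huE := Fintype.linearIndependent_iff.mp hu
  -- γ is ℚ_p-linearly independent
  have hγli : LinearIndependent ℚ_[p] γ := by
    rw [Fintype.linearIndependent_iff]
    intro g hg
    have hsum : ∑ k, g k • γ k
        = (∑ j, g (Sum.inl j) • bE j) • u 0 + (∑ j, g (Sum.inr j) • bE j) • u 1 := by
      rw [Fintype.sum_sum_type]
      congr 1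
      · rw [Finset.sum_smul]
        apply Finset.sum_congr rfl
        intro j _
        simp only [hγdef, Sum.elim_inl]
        rw [smul_assoc]
      · rw [Finset.sum_smul]
        apply Finset.sum_congr rfl
        intro j _
        simp only [hγdef, Sum.elim_inr]
        rw [smul_assoc]
    have hcoef : ∀ i : Fin 2, (![∑ j, g (Sum.inl j) • bE j, ∑ j, g (Sum.inr j) • bE j] i) = 0 := by
      apply huE
      rw [Fin.sum_univ_two]
      simp only [Matrix.cons_val_zero, Matrix.cons_val_one, Matrix.head_cons]
      rw [← hsum, hg]
    have h0 := hcoef 0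
    have h1 := hcoef 1
    simp only [Matrix.cons_val_zero, Matrix.cons_val_one, Matrix.head_cons] at h0 h1
    have hbE2 := Fintype.linearIndependent_iff.mp bE.linearIndependent
    intro k
    cases k with
    | inl j => exact hbE2 _ h0 j
    | inr j => exact hbE2 _ h1 j
  -- γ spans over ℚ_p
  have hγsp : ⊤ ≤ Submodule.span ℚ_[p] (Set.range γ) := by
    intro x _
    have hx : x ∈ Submodule.span ℚ_[p] (Λ : Set (E × E)) := by rw [hspan]; trivial
    have hsub : (Λ : Set (E × E)) ⊆
        (Submodule.span ℚ_[p] (Set.range γ) : Set (E × E)) := by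
      intro y hy
      rw [hΛ'] at hy
      exact Submodule.span_le_restrictScalars ℤ_[p] ℚ_[p] (Set.range γ) hy
    exact Submodule.span_le.mpr hsub hx
  set bγ : Basis (Fin 2 ⊕ Fin 2) ℚ_[p] (E × E) := Basis.mk hγli hγsp with hbγ
  have hbγapp : ∀ k, bγ k = γ k := fun k => by rw [hbγ, Basis.mk_apply]
  -- Gram matrix of Ψ in the product basis
  set J : Matrix (Fin 2) (Fin 2) ℚ_[p] := !![0, 1; -1, 0] with hJ
  have hG₀ : LinearMap.BilinForm.toMatrix b₀ Ψ
      = Matrix.fromBlocks ((p : ℚ_[p]) • J) 0 0 J := by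
    ext k l
    rw [BilinForm.toMatrix_apply]
    cases k with
    | inl i =>
      cases l with
      | inl j =>
        rw [hΨapp]
        simp only [hψf, hb₀, Basis.prod_apply_inl_fst, Basis.prod_apply_inl_snd,
          map_zero, Finsupp.zero_apply, Basis.repr_self, Matrix.fromBlocks_apply₁₁,
          Matrix.smul_apply, smul_eq_mul]
        fin_cases i <;> fin_cases j <;>
          simp [hJ, Finsupp.single_apply] <;> ring
      | inr j =>
        rw [hΨapp]
        simp only [hψf, hb₀, Basis.prod_apply_inl_fst, Basis.prod_apply_inl_snd,
          Basis.prod_apply_inr_fst, Basis.prod_apply_inr_snd,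
          map_zero, Finsupp.zero_apply, Basis.repr_self, Matrix.fromBlocks_apply₁₂,
          Matrix.zero_apply]
        ring
    | inr i =>
      cases l with
      | inl j =>
        rw [hΨapp]
        simp only [hψf, hb₀, Basis.prod_apply_inl_fst, Basis.prod_apply_inl_snd,
          Basis.prod_apply_inr_fst, Basis.prod_apply_inr_snd,
          map_zero, Finsupp.zero_apply, Basis.repr_self, Matrix.fromBlocks_apply₂₁,
          Matrix.zero_apply]
        ring
      | inr j =>
        rw [hΨapp]
        simp only [hψf, hb₀, Basis.prod_apply_inr_fst, Basis.prod_apply_inr_snd,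
          map_zero, Finsupp.zero_apply, Basis.repr_self, Matrix.fromBlocks_apply₂₂]
        fin_cases i <;> fin_cases j <;>
          simp [hJ, Finsupp.single_apply] <;> ring
  have hdetJ : J.det = 1 := by
    rw [hJ, Matrix.det_fin_two_of]; ring
  have hdetG₀ : (LinearMap.BilinForm.toMatrix b₀ Ψ).det = (p : ℚ_[p]) ^ 2 := by
    rw [hG₀, Matrix.det_fromBlocks_zero₁₂, Matrix.det_smul, hdetJ]
    simp
  -- the transition matrix P in block form
  set L := Algebra.leftMulMatrix bE with hL
  set a1 := (u 0).1
  set b1 := (u 1).1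
  set c1 := (u 0).2
  set d1 := (u 1).2
  have hP : b₀.toMatrix ⇑bγ = Matrix.fromBlocks (L a1) (L b1) (L c1) (L d1) := by
    ext k l
    rw [Basis.toMatrix_apply]
    have hco : ⇑bγ = γ := by rw [hbγ]; exact Basis.coe_mk _ _
    rw [hco]
    cases k with
    | inl i =>
      cases l with
      | inl j =>
        simp only [hγdef, Sum.elim_inl, hb₀, Basis.prod_repr_inl, Matrix.fromBlocks_apply₁₁,
          hL, Algebra.leftMulMatrix_eq_repr_mul, Prod.smul_fst, smul_eq_mul, mul_comm]
        rfl
      | inr j =>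
        simp only [hγdef, Sum.elim_inr, hb₀, Basis.prod_repr_inl, Matrix.fromBlocks_apply₁₂,
          hL, Algebra.leftMulMatrix_eq_repr_mul, Prod.smul_fst, smul_eq_mul, mul_comm]
        rfl
    | inr i =>
      cases l with
      | inl j =>
        simp only [hγdef, Sum.elim_inl, hb₀, Basis.prod_repr_inr, Matrix.fromBlocks_apply₂₁,
          hL, Algebra.leftMulMatrix_eq_repr_mul, Prod.smul_snd, smul_eq_mul, mul_comm]
        rfl
      | inr j =>
        simp only [hγdef, Sum.elim_inr, hb₀, Basis.prod_repr_inr, Matrix.fromBlocks_apply₂₂,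
          hL, Algebra.leftMulMatrix_eq_repr_mul, Prod.smul_snd, smul_eq_mul, mul_comm]
        rfl
  -- δ ≠ 0
  have hδ : a1 * d1 - b1 * c1 ≠ 0 := by
    intro hδ0
    have h1 : ∑ i, (![d1, -c1] : Fin 2 → E) i • u i = 0 := by
      rw [Fin.sum_univ_two]
      simp only [Matrix.cons_val_zero, Matrix.cons_val_one, Matrix.head_cons]
      have : d1 • u 0 + (-c1) • u 1 = (d1 * a1 + (-c1) * b1, d1 * c1 + (-c1) * d1) := by
        ext <;> simp [Prod.smul_fst, Prod.smul_snd, smul_eq_mul, a1, b1, c1, d1]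
      rw [this]
      have e1 : d1 * a1 + (-c1) * b1 = 0 := by rw [← hδ0]; ring
      have e2 : d1 * c1 + (-c1) * d1 = 0 := by ring
      rw [e1, e2]; rfl
    have h2 : ∑ i, (![b1, -a1] : Fin 2 → E) i • u i = 0 := by
      rw [Fin.sum_univ_two]
      simp only [Matrix.cons_val_zero, Matrix.cons_val_one, Matrix.head_cons]
      have : b1 • u 0 + (-a1) • u 1 = (b1 * a1 + (-a1) * b1, b1 * c1 + (-a1) * d1) := by
        ext <;> simp [Prod.smul_fst, Prod.smul_snd, smul_eq_mul, a1, b1, c1, d1]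
      rw [this]
      have e1 : b1 * a1 + (-a1) * b1 = 0 := by ring
      have e2 : b1 * c1 + (-a1) * d1 = 0 := by rw [← neg_eq_zero, ← hδ0]; ring
      rw [e1, e2]; rfl
    have hd1 := huE _ h1 0
    have hc1 := huE _ h1 1
    have hb1 := huE _ h2 0
    have ha1 := huE _ h2 1
    simp only [Matrix.cons_val_zero, Matrix.cons_val_one, Matrix.head_cons, neg_eq_zero] at hd1 hc1 hb1 ha1
    have : u 0 = 0 := by
      have : u 0 = (a1, c1) := rfl
      rw [this, ha1, hc1]; rfl
    exact hu.ne_zero 0 this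
  -- parity of the determinant of P
  have hdetPne : (b₀.toMatrix ⇑bγ).det ≠ 0 := by
    have hflip := Basis.toMatrix_mul_toMatrix_flip b₀ bγ
    intro h0
    have := congrArg Matrix.det hflip
    rw [Matrix.det_mul, h0, zero_mul, Matrix.det_one] at this
    exact zero_ne_one this
  have hdetP_even : Even ((b₀.toMatrix ⇑bγ).det.valuation) := by
    rcases eq_or_ne a1 0 with ha0 | ha0
    · -- a1 = 0 : δ = -b1 c1, swap decomposition
      have hb1ne : b1 ≠ 0 := by
        intro h; apply hδ; rw [ha0, h]; ring
      have hc1ne : c1 ≠ 0 := by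
        intro h; apply hδ; rw [ha0, h]; ring
      set Sw : Matrix ((Fin 2) ⊕ (Fin 2)) ((Fin 2) ⊕ (Fin 2)) ℚ_[p] :=
        Matrix.fromBlocks 0 1 1 0 with hSw
      have hdec : Matrix.fromBlocks (L a1) (L b1) (L c1) (L d1)
          = Sw * Matrix.fromBlocks (L c1) (L d1) 0 (L b1) := by
        rw [hSw, Matrix.fromBlocks_multiply, ha0, map_zero]
        simp
      have hs2 : Sw.det * Sw.det = 1 := by
        rw [← Matrix.det_mul, hSw, Matrix.fromBlocks_multiply]
        simp [Matrix.fromBlocks_one]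
      set s := Sw.det with hsdef
      have hsne : s ≠ 0 := by
        intro h; rw [h, zero_mul] at hs2; exact zero_ne_one hs2
      have hsval : s.valuation = 0 := by
        have := Padic.valuation_mul hsne hsne
        rw [hs2, Padic.valuation_one] at this
        omega
      rw [hP, hdec, Matrix.det_mul, Matrix.det_fromBlocks_zero₂₁]
      have hNc := NN_parity bE hbE hunram hc1ne
      have hNb := NN_parity bE hbE hunram hb1ne
      have hNcne : NN bE c1 ≠ 0 := NN_ne_zero bE hc1ne
      have hNbne : NN bE b1 ≠ 0 := NN_ne_zero bE hb1ne
      have hNN : (L c1).det * (L b1).det = NN bE c1 * NN bE b1 := rfl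
      rw [← hsdef, hNN, Padic.valuation_mul hsne (mul_ne_zero hNcne hNbne),
        Padic.valuation_mul hNcne hNbne, hsval, zero_add]
      exact Even.add (hNc) (hNb)
    · -- a1 ≠ 0 : Gauss decomposition
      have hδa : a1 * d1 - b1 * c1 ≠ 0 := hδ
      have hdec : Matrix.fromBlocks (L a1) (L b1) (L c1) (L d1)
          = Matrix.fromBlocks 1 0 (L (c1 / a1)) 1
            * Matrix.fromBlocks (L a1) (L b1) 0 (L ((a1 * d1 - b1 * c1) / a1)) := by
        rw [Matrix.fromBlocks_multiply]
        have eA : (1 : Matrix (Fin 2) (Fin 2) ℚ_[p]) * L a1 + 0 * 0 = L a1 := by simp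
        have eB : (1 : Matrix (Fin 2) (Fin 2) ℚ_[p]) * L b1
            + 0 * L ((a1 * d1 - b1 * c1) / a1) = L b1 := by simp
        have eC : L (c1 / a1) * L a1 + 1 * 0 = L c1 := by
          rw [← map_mul, div_mul_cancel₀ _ ha0]; simp
        have eD : L (c1 / a1) * L b1 + 1 * L ((a1 * d1 - b1 * c1) / a1) = L d1 := by
          rw [Matrix.one_mul, ← map_mul, ← map_add]
          congr 1
          field_simp
          ring
        rw [eA, eB, eC, eD]
      have hdet1 : (Matrix.fromBlocks (1 : Matrix (Fin 2) (Fin 2) ℚ_[p]) 0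
          (L (c1 / a1)) 1).det = 1 := by
        rw [Matrix.det_fromBlocks_zero₁₂]
        simp
      have hdane : (a1 * d1 - b1 * c1) / a1 ≠ 0 := div_ne_zero hδ ha0
      have hNa := NN_parity bE hbE hunram ha0
      have hNda := NN_parity bE hbE hunram hdane
      have hNane : NN bE a1 ≠ 0 := NN_ne_zero bE ha0
      have hNdane : NN bE ((a1 * d1 - b1 * c1) / a1) ≠ 0 := NN_ne_zero bE hdane
      have hNN : (L a1).det * (L ((a1 * d1 - b1 * c1) / a1)).det
          = NN bE a1 * NN bE ((a1 * d1 - b1 * c1) / a1) := rfl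
      rw [hP, hdec, Matrix.det_mul, hdet1, one_mul, Matrix.det_fromBlocks_zero₂₁,
        hNN, Padic.valuation_mul hNane hNdane]
      exact Even.add hNa hNda
  -- Gram matrix in the lattice basis
  have inR_zero : InR (0 : ℚ_[p]) := by simp [InR]
  have inR_one : InR (1 : ℚ_[p]) := by simp [InR]
  set G := LinearMap.BilinForm.toMatrix bγ Ψ with hG
  have hGbase : (b₀.toMatrix ⇑bγ).transpose * LinearMap.BilinForm.toMatrix b₀ Ψ * b₀.toMatrix ⇑bγ = G :=
    BilinForm.toMatrix_mul_basis_toMatrix b₀ bγ Ψ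
  have hdetG : G.det = (b₀.toMatrix ⇑bγ).det ^ 2 * (p : ℚ_[p]) ^ 2 := by
    rw [← hGbase, Matrix.det_mul, Matrix.det_mul, Matrix.det_transpose, hdetG₀]; ring
  have hdetGne : G.det ≠ 0 := by
    rw [hdetG]; exact mul_ne_zero (pow_ne_zero _ hdetPne) (pow_ne_zero _ hpne)
  have hGapp : ∀ k l, G k l = ψf (γ k) (γ l) := by
    intro k l; rw [hG, BilinForm.toMatrix_apply, hbγapp, hbγapp, hΨapp]
  -- lattice elements have integral coordinates
  have hreprInR : ∀ w ∈ Λ, ∀ k, InR (bγ.repr w k) := by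
    intro w hw
    rw [hΛ'] at hw
    induction hw using Submodule.span_induction with
    | mem z hz =>
      obtain ⟨l, rfl⟩ := hz
      intro k
      rw [← hbγapp, bγ.repr_self]
      rcases eq_or_ne l k with rfl | hlk
      · rw [Finsupp.single_eq_same]; exact inR_one
      · rw [Finsupp.single_eq_of_ne hlk.symm]; exact inR_zero
    | zero => intro k; rw [map_zero, Finsupp.zero_apply]; exact inR_zero
    | add y z _ _ hy hz =>
      intro k; rw [map_add, Finsupp.add_apply]; exact (hy k).add (hz k)
    | smul r y _ hy =>
      intro k
      rw [zsmulV, map_smul, Finsupp.smul_apply, smul_eq_mul]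
      exact (inR_coe r).mul (hy k)
  -- Ψ(x, ·) integral on generators implies integral on Λ
  have hPsiInR : ∀ x : E × E, (∀ l, InR (ψf x (γ l))) → ∀ w ∈ Λ, InR (ψf x w) := by
    intro x hx w hw
    rw [hΛ'] at hw
    induction hw using Submodule.span_induction with
    | mem z hz => obtain ⟨l, rfl⟩ := hz; exact hx l
    | zero =>
      have : ψf x 0 = 0 := by rw [← hΨapp]; exact map_zero (Ψ x)
      rw [this]; exact inR_zero
    | add y z _ _ hy hz =>
      have : ψf x (y + z) = ψf x y + ψf x z := hadd2 x y z
      rw [this]; exact hy.add hz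
    | smul r y _ hy =>
      have : ψf x (r • y) = (r : ℚ_[p]) * ψf x y := by
        rw [zsmulV, hsmul2, smul_eq_mul]
      rw [this]; exact (inR_coe r).mul hy
  have hγmem : ∀ k, γ k ∈ Λ := by
    intro k; rw [hΛ']; exact Submodule.subset_span ⟨k, rfl⟩
  -- (i) entries of c • G are integral
  have hcG : ∀ k l, InR (c * G k l) := by
    intro k l
    have himg : c • γ k ∈ (fun v : E × E => c • v) '' (Λ : Set (E × E)) :=
      ⟨γ k, hγmem k, rfl⟩
    rw [← hdual] at himg
    obtain ⟨z, hz⟩ := himg (γ l) (hγmem l)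
    have heq : ψf (c • γ k) (γ l) = c * G k l := by
      rw [← hΨapp, map_smul, LinearMap.smul_apply, hΨapp, smul_eq_mul, hGapp]
    exact inR_iff.mpr ⟨z, hz.trans heq⟩
  -- (ii) the dual basis vectors
  have hGunit : IsUnit G.det := isUnit_iff_ne_zero.mpr hdetGne
  have hGinvG : G⁻¹ * G = 1 := Matrix.nonsing_inv_mul G hGunit
  have hGG : G * G⁻¹ = 1 := Matrix.mul_nonsing_inv G hGunit
  set dv : (Fin 2 ⊕ Fin 2) → E × E := fun k => ∑ l, G⁻¹ k l • γ l with hdv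
  have hdvPsi : ∀ k j, ψf (dv k) (γ j) = (G⁻¹ * G) k j := by
    intro k j
    rw [← hΨapp, hdv]
    rw [map_sum, LinearMap.sum_apply, Matrix.mul_apply]
    apply Finset.sum_congr rfl
    intro l _
    rw [map_smul, LinearMap.smul_apply, hΨapp, smul_eq_mul, hGapp]
  have hdvdual : ∀ k, dv k ∈ (fun v : E × E => c • v) '' (Λ : Set (E × E)) := by
    intro k
    rw [← hdual]
    intro w' hw'
    have h1 : InR (ψf (dv k) w') := by
      apply hPsiInR _ _ w' hw'
      intro l
      rw [hdvPsi, hGinvG]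
      rcases eq_or_ne k l with rfl | hkl
      · rw [Matrix.one_apply_eq]; exact inR_one
      · rw [Matrix.one_apply_ne hkl]; exact inR_zero
    obtain ⟨z, hz⟩ := inR_iff.mp h1
    exact ⟨z, hz⟩
  choose wv hwvΛ hwveq using fun k => hdvdual k
  have hrepr_dv : ∀ k l, bγ.repr (dv k) l = G⁻¹ k l := by
    intro k l
    have : dv k = ∑ l, G⁻¹ k l • bγ l := by
      rw [hdv]
      apply Finset.sum_congr rfl
      intro l _
      rw [hbγapp]
    rw [this]
    rw [show (bγ.repr (∑ l, G⁻¹ k l • bγ l)) l = (fun j => G⁻¹ k j) l from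
      congrFun (bγ.repr_sum_self _) l]
  set S : Matrix (Fin 2 ⊕ Fin 2) (Fin 2 ⊕ Fin 2) ℚ_[p] := Matrix.of fun k l => bγ.repr (wv k) l with hS
  have hSInR : ∀ k l, InR (S k l) := fun k l => hreprInR _ (hwvΛ k) l
  have hGinv_cS : G⁻¹ = c • S := by
    ext k l
    rw [← hrepr_dv k l, ← hwveq k]
    show bγ.repr (c • wv k) l = (c • S) k l
    rw [map_smul, Finsupp.smul_apply, smul_eq_mul, Matrix.smul_apply, smul_eq_mul]
    rfl
  have hdetmain : (c • G).det * S.det = 1 := by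
    have h2 : (c • G) * S = 1 := by
      rw [Matrix.smul_mul, ← Matrix.mul_smul, ← hGinv_cS]
      exact hGG
    rw [← Matrix.det_mul, h2, Matrix.det_one]
  have hcGInR : ∀ k l, InR ((c • G) k l) := by
    intro k l
    rw [Matrix.smul_apply, smul_eq_mul]
    exact hcG k l
  have hvalcG : ((c • G).det).valuation = 0 :=
    val_unit_zero (det_inR hcGInR) (det_inR hSInR) hdetmain
  have hcard : Fintype.card (Fin 2 ⊕ Fin 2) = 4 := by simp
  have hdetcG : (c • G).det = c ^ 4 * G.det := by
    rw [Matrix.det_smul, hcard]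
  have hc4 : c ^ 4 ≠ 0 := pow_ne_zero _ hc
  have hvc : (c ^ 4 * G.det).valuation = 4 * c.valuation + G.det.valuation := by
    rw [Padic.valuation_mul hc4 hdetGne, val_pow c hc 4]
    push_cast; ring
  have hvalG : G.det.valuation
      = 2 * (b₀.toMatrix ⇑bγ).det.valuation + 2 := by
    rw [hdetG, Padic.valuation_mul (pow_ne_zero _ hdetPne) (pow_ne_zero _ hpne),
      val_pow _ hdetPne 2, val_p_pow 2]
    push_cast; ring
  obtain ⟨t, ht⟩ := hdetP_even
  rw [hdetcG, hvc, hvalG, ht] at hvalcG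
  omega



end NSD

/-- Remark 1.3 of the paper: for the 4-dimensional symplectic space
`U = E × E` (with `E/ℚ_p` quadratic unramified) and the form
`ψ((x,x'),(y,y')) = p·d(x,y) + d(x',y')`, there is no ℤ_p-lattice in `U` which is an
`O_E`-submodule and homothetic to its dual lattice. -/
theorem no_selfdual_up_to_homothety_OE_lattice
    (p : ℕ) [Fact p.Prime]
    (E : Type*) [Field E] [Algebra ℚ_[p] E] [Algebra ℤ_[p] E]
    [IsScalarTower ℤ_[p] ℚ_[p] E]
    (hdim : Module.finrank ℚ_[p] E = 2)
    -- unramified : the maximal ideal of O_E is generated by p :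
    (hunram : (Ideal.span {(p : integralClosure ℤ_[p] E)}).IsMaximal)
    -- a ℤ_p-basis (e₁, e₂) = (bE 0, bE 1) of O_E :
    (bE : Module.Basis (Fin 2) ℚ_[p] E)
    (hbE : Submodule.span ℤ_[p] {bE 0, bE 1}
      = Subalgebra.toSubmodule (integralClosure ℤ_[p] E)) :
    ¬ ∃ Λ : Submodule ℤ_[p] (E × E),
      -- Λ is a ℤ_p-lattice in U = E × E :
      Λ.FG ∧ Submodule.span ℚ_[p] (Λ : Set (E × E)) = ⊤ ∧
      -- Λ is an O_E-submodule :
      (∀ a : E, a ∈ integralClosure ℤ_[p] E → ∀ v ∈ Λ, a • v ∈ Λ) ∧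
      -- Λ is homothetic to its dual lattice Λ* = {u | ψ(u, w) ∈ ℤ_p ∀ w ∈ Λ} :
      ∃ c : ℚ_[p], c ≠ 0 ∧
        {u : E × E | ∀ w ∈ Λ, ∃ z : ℤ_[p], (z : ℚ_[p]) =
            (p : ℚ_[p]) * (bE.repr u.1 0 * bE.repr w.1 1 - bE.repr u.1 1 * bE.repr w.1 0)
            + (bE.repr u.2 0 * bE.repr w.2 1 - bE.repr u.2 1 * bE.repr w.2 0)}
          = (fun v : E × E => c • v) '' (Λ : Set (E × E)) := by
  rintro ⟨Λ, hFG, hspan, hO, c, hc, hdual⟩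
  obtain ⟨u, hu, hΛ⟩ := NSD.exists_good_basis bE hbE hunram Λ hFG hspan hO
  exact NSD.main_false bE hbE hunram Λ hspan u hu hΛ c hc hdual
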